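/- The discrete flow defined by the discrete Euler–Lagrange equations is symplectic: let L, L' : E × E → ℝ be twice continuously differentiable discrete Lagrangians (for two consecutive time steps) and let ψ : E × E → E be twice continuously differentiable such that the one-step map Φ(x,y) = (y, ψ(x,y)) satisfies the discrete Euler–Lagrange matching condition D₁L'(y, ψ(x,y)) + D₂L(x,y) = 0 for all (x,y) ∈ E × E. Then Φ pulls back the discrete symplectic form of L' to that of L: for every z ∈ E × E and all w₁, w₂ ∈ E × E, Ω_{L'}(Φ(z))(DΦ(z)w₁, DΦ(z)w₂) = Ω_L(z)(w₁, w₂), where DΦ(z) is the Fréchet derivative of Φ at z. -/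

import Mathlib

/-- Partial Fréchet derivative of a discrete Lagrangian `L : E × E → ℝ` in its
first argument, evaluated at the point `(x, y)`. -/
noncomputable def D1 {E : Type*} [NormedAddCommGroup E] [NormedSpace ℝ E]
    (L : E × E → ℝ) (x y : E) : E →L[ℝ] ℝ :=
  fderiv ℝ (fun x' => L (x', y)) x

/-- Partial Fréchet derivative of a discrete Lagrangian `L : E × E → ℝ` in its
second argument, evaluated at the point `(x, y)`. -/
noncomputable def D2 {E : Type*} [NormedAddCommGroup E] [NormedSpace ℝ E]
    (L : E × E → ℝ) (x y : E) : E →L[ℝ] ℝ :=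
  fderiv ℝ (fun y' => L (x, y')) y

/-- The right discrete one-form `Θ⁺_L(x,y)(u,v) = D₂L(x,y)(v)`. -/
noncomputable def thetaPlus {E : Type*} [NormedAddCommGroup E] [NormedSpace ℝ E]
    (L : E × E → ℝ) (z : E × E) : E × E →L[ℝ] ℝ :=
  (D2 L z.1 z.2).comp (ContinuousLinearMap.snd ℝ E E)

/-- The left discrete one-form `Θ⁻_L(x,y)(u,v) = D₁L(x,y)(u)`. -/
noncomputable def thetaMinus {E : Type*} [NormedAddCommGroup E] [NormedSpace ℝ E]
    (L : E × E → ℝ) (z : E × E) : E × E →L[ℝ] ℝ :=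
  (D1 L z.1 z.2).comp (ContinuousLinearMap.fst ℝ E E)

/-- Exterior derivative of a one-form `θ` on the vector space `E × E`:
`dθ(z)(w₁,w₂) = (Dθ(z)w₁)(w₂) − (Dθ(z)w₂)(w₁)`. -/
noncomputable def extDer {E : Type*} [NormedAddCommGroup E] [NormedSpace ℝ E]
    (θ : E × E → (E × E →L[ℝ] ℝ)) (z w₁ w₂ : E × E) : ℝ :=
  fderiv ℝ θ z w₁ w₂ - fderiv ℝ θ z w₂ w₁

/-- The discrete symplectic two-form `Ω_L := dΘ⁺_L` of the discrete Lagrangian `L`. -/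
noncomputable def OmegaL {E : Type*} [NormedAddCommGroup E] [NormedSpace ℝ E]
    (L : E × E → ℝ) (z w₁ w₂ : E × E) : ℝ :=
  extDer (thetaPlus L) z w₁ w₂


section Aux

open ContinuousLinearMap

variable {E : Type*} [NormedAddCommGroup E] [NormedSpace ℝ E]

lemma D2_eq (L : E × E → ℝ) (hL : Differentiable ℝ L) (x y : E) :
    D2 L x y = (fderiv ℝ L (x, y)).comp (ContinuousLinearMap.inr ℝ E E) :=
  ((hL (x, y)).hasFDerivAt.comp y (hasFDerivAt_prodMk_right x y)).fderiv

lemma D1_eq (L : E × E → ℝ) (hL : Differentiable ℝ L) (x y : E) :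
    D1 L x y = (fderiv ℝ L (x, y)).comp (ContinuousLinearMap.inl ℝ E E) :=
  ((hL (x, y)).hasFDerivAt.comp x (hasFDerivAt_prodMk_left x y)).fderiv

/-- Precomposition with a fixed continuous linear map, as a continuous linear map. -/
noncomputable def precompCLM (P : E × E →L[ℝ] E × E) :
    ((E × E) →L[ℝ] ℝ) →L[ℝ] ((E × E) →L[ℝ] ℝ) :=
  (ContinuousLinearMap.compL ℝ (E × E) (E × E) ℝ).flip P

@[simp] lemma precompCLM_apply (P : E × E →L[ℝ] E × E) (f : (E × E) →L[ℝ] ℝ) :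
    precompCLM P f = f.comp P := rfl

lemma fderiv_thetaPlus (L : E × E → ℝ) (hL : ContDiff ℝ 2 L) (z w w' : E × E) :
    fderiv ℝ (thetaPlus L) z w w' = fderiv ℝ (fderiv ℝ L) z w (0, w'.2) := by
  have hLd : Differentiable ℝ L := hL.differentiable (by norm_num)
  have hdL : Differentiable ℝ (fderiv ℝ L) :=
    (hL.fderiv_right (m := 1) (by norm_num)).differentiable (by norm_num)
  set P : E × E →L[ℝ] E × E :=
    (ContinuousLinearMap.inr ℝ E E).comp (ContinuousLinearMap.snd ℝ E E) with hP
  have hfun : thetaPlus L = fun p => precompCLM P (fderiv ℝ L p) := by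
    funext p
    simp only [thetaPlus, precompCLM_apply, D2_eq L hLd, hP, ContinuousLinearMap.comp_assoc]
  have hder : HasFDerivAt (thetaPlus L)
      ((precompCLM P).comp (fderiv ℝ (fderiv ℝ L) z)) z := by
    rw [hfun]
    exact (precompCLM P).hasFDerivAt.comp z (hdL z).hasFDerivAt
  rw [hder.fderiv]
  simp [hP]

end Aux

set_option maxHeartbeats 2000000 in
/-- The discrete flow defined by the discrete Euler–Lagrange equations is
symplectic: if the one-step map `Φ(x,y) = (y, ψ(x,y))` satisfies the discrete
Euler–Lagrange matching condition `D₁L'(y, ψ(x,y)) + D₂L(x,y) = 0`, then `Φ`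
pulls back the discrete symplectic form of `L'` to that of `L`. -/
theorem discrete_flow_symplectic
    {E : Type*} [NormedAddCommGroup E] [NormedSpace ℝ E] [FiniteDimensional ℝ E]
    (L L' : E × E → ℝ) (hL : ContDiff ℝ 2 L) (hL' : ContDiff ℝ 2 L')
    (ψ : E × E → E) (hψ : ContDiff ℝ 2 ψ)
    (hDEL : ∀ z : E × E, D1 L' z.2 (ψ z) + D2 L z.1 z.2 = 0) :
    ∀ (z w₁ w₂ : E × E),
      OmegaL L' ((fun z : E × E => (z.2, ψ z)) z)
          (fderiv ℝ (fun z : E × E => (z.2, ψ z)) z w₁)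
          (fderiv ℝ (fun z : E × E => (z.2, ψ z)) z w₂)
        = OmegaL L z w₁ w₂ := by
  classical
  intro z w₁ w₂
  have hLd : Differentiable ℝ L := hL.differentiable (by norm_num)
  have hL'd : Differentiable ℝ L' := hL'.differentiable (by norm_num)
  have hdL : Differentiable ℝ (fderiv ℝ L) :=
    (hL.fderiv_right (m := 1) (by norm_num)).differentiable (by norm_num)
  have hdL' : Differentiable ℝ (fderiv ℝ L') :=
    (hL'.fderiv_right (m := 1) (by norm_num)).differentiable (by norm_num)
  have hψd : Differentiable ℝ ψ := hψ.differentiable (by norm_num)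
  set Φ : E × E → E × E := fun p => (p.2, ψ p) with hΦdef
  set DΦ : (E × E) →L[ℝ] (E × E) :=
    (ContinuousLinearMap.snd ℝ E E).prod (fderiv ℝ ψ z) with hDΦ
  have hΦz : HasFDerivAt Φ DΦ z :=
    HasFDerivAt.prodMk hasFDerivAt_snd (hψd z).hasFDerivAt
  have hfΦ : fderiv ℝ Φ z = DΦ := hΦz.fderiv
  set A : (E × E) →L[ℝ] (E × E) →L[ℝ] ℝ := fderiv ℝ (fderiv ℝ L) z with hA
  set B : (E × E) →L[ℝ] (E × E) →L[ℝ] ℝ := fderiv ℝ (fderiv ℝ L') (Φ z) with hB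
  -- symmetry of second derivatives
  have hAsymm : ∀ v w : E × E, A v w = A w v := fun v w =>
    second_derivative_symmetric (fun y => (hLd y).hasFDerivAt) (hdL z).hasFDerivAt v w
  have hBsymm : ∀ v w : E × E, B v w = B w v := fun v w =>
    second_derivative_symmetric (fun y => (hL'd y).hasFDerivAt) (hdL' (Φ z)).hasFDerivAt v w
  -- differentiate the discrete Euler-Lagrange identity
  set gl : ((E × E) →L[ℝ] ℝ) →L[ℝ] (E →L[ℝ] ℝ) :=
    (ContinuousLinearMap.compL ℝ E (E × E) ℝ).flip (ContinuousLinearMap.inl ℝ E E) with hgl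
  set gr : ((E × E) →L[ℝ] ℝ) →L[ℝ] (E →L[ℝ] ℝ) :=
    (ContinuousLinearMap.compL ℝ E (E × E) ℝ).flip (ContinuousLinearMap.inr ℝ E E) with hgr
  set F : E × E → (E →L[ℝ] ℝ) :=
    fun p => gl (fderiv ℝ L' (Φ p)) + gr (fderiv ℝ L p) with hFdef
  have hF0 : F = fun _ => (0 : E →L[ℝ] ℝ) := by
    funext p
    have := hDEL p
    rw [D1_eq L' hL'd, D2_eq L hLd] at this
    simpa [hFdef, hgl, hgr] using this
  have hFder : HasFDerivAt F (gl.comp (B.comp DΦ) + gr.comp A) z := by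
    have h1 : HasFDerivAt (fun p => gl (fderiv ℝ L' (Φ p))) (gl.comp (B.comp DΦ)) z :=
      gl.hasFDerivAt.comp z ((hdL' (Φ z)).hasFDerivAt.comp z hΦz)
    have h2 : HasFDerivAt (fun p => gr (fderiv ℝ L p)) (gr.comp A) z :=
      gr.hasFDerivAt.comp z (hdL z).hasFDerivAt
    exact h1.add h2
  have hFder0 : HasFDerivAt F (0 : (E × E) →L[ℝ] (E →L[ℝ] ℝ)) z := by
    rw [hF0]; exact hasFDerivAt_const _ _
  have hkey0 : gl.comp (B.comp DΦ) + gr.comp A = 0 := hFder.unique hFder0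
  have hkey : ∀ (w : E × E) (u : E), B (DΦ w) (u, 0) + A w (0, u) = 0 := by
    intro w u
    have := congrFun (congrArg (fun T => fun w u => T w u) hkey0) w
    have h2 := congrFun this u
    simpa [hgl, hgr] using h2
  -- expand OmegaL on both sides
  simp only [OmegaL, extDer, hfΦ]
  rw [fderiv_thetaPlus L' hL' (Φ z), fderiv_thetaPlus L' hL' (Φ z),
    fderiv_thetaPlus L hL z, fderiv_thetaPlus L hL z]
  set W₁ : E × E := DΦ w₁ with hW₁
  set W₂ : E × E := DΦ w₂ with hW₂
  have hW₁1 : W₁.1 = w₁.2 := rfl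
  have hW₂1 : W₂.1 = w₂.2 := rfl
  have hsplit : ∀ V W : E × E, B V (0, W.2) = B V W - B V (W.1, 0) := by
    intro V W
    have : W = (W.1, (0:E)) + ((0:E), W.2) := by simp
    rw [show B V W = B V ((W.1, (0:E)) + ((0:E), W.2)) by rw [← this]]
    rw [map_add]; ring
  rw [hsplit W₁ W₂, hsplit W₂ W₁, hW₁1, hW₂1]
  have k1 : B W₁ (w₂.2, 0) + A w₁ (0, w₂.2) = 0 := hkey w₁ w₂.2
  have k2 : B W₂ (w₁.2, 0) + A w₂ (0, w₁.2) = 0 := hkey w₂ w₁.2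
  have hBW : B W₁ W₂ = B W₂ W₁ := hBsymm W₁ W₂
  rw [← hA]
  linarith
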